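/- Fix V ≥ 2, N = V(V−1)/2, H ≥ 1, and R ≥ V. Let Π_Z be a Borel probability measure on ℝ^N, Π_X a Borel probability measure on ℝ^{V×R}, and Π_λ a Borel probability measure on the nonnegative orthant ℝ_{≥0}^R, each with full L1 support on its space: Π_Z assigns positive mass to every set {Z : Σ_l |Z_l − Z^0_l| < ε} for every Z^0 ∈ ℝ^N and ε > 0, Π_X assigns positive mass to every set {X : Σ_{v,r} |X_{vr} − X^0_{vr}| < ε} for every X^0 ∈ ℝ^{V×R} and ε > 0, and Π_λ assigns positive mass to every set {λ : Σ_r |λ_r − λ^0_r| < ε} for every λ^0 ∈ ℝ_{≥0}^R and ε > 0. Let Π_π be the joint law of (π^{(1)},…,π^{(H)}) where Z ∼ Π_Z, the pairs (X^{(h)}, λ^{(h)}) ∼ Π_X ⊗ Π_λ are independent across h = 1,…,H and independent of Z, and π^{(h)}_l = 1/(1 + exp(−Z_l − L(X^{(h)} Λ^{(h)} X^{(h)T})_l)) with Λ^{(h)} the diagonal matrix with diagonal λ^{(h)}. Then for every collection (π^{0(1)},…,π^{0(H)}) ∈ ((0,1)^N)^H and every ε_π > 0, Π_π{Σ_{h=1}^H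 Σ_{l=1}^N |π^{(h)}_l − π^{0(h)}_l| < ε_π} > 0. -/

import Mathlib

open MeasureTheory Matrix

/-- The index set of edges: pairs `(v, u)` with `u < v`, of cardinality `V(V-1)/2`. -/
abbrev EdgeIdx (V : ℕ) := {q : Fin V × Fin V // q.2 < q.1}

/-- Column-by-column Cholesky-type construction: a lower-triangular matrix with unit
diagonal whose Gram matrix has prescribed strictly lower-triangular entries `t`. -/
noncomputable def chol {V : ℕ} (t : Fin V → Fin V → ℝ) (u : ℕ) (v : Fin V) : ℝ :=
  if h : u < v.val then
    t v ⟨u, h.trans v.isLt⟩ - ∑ w ∈ (Finset.range u).attach,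
      chol t w.1 v * chol t w.1 ⟨u, h.trans v.isLt⟩
  else if v.val = u then 1 else 0
termination_by u
decreasing_by all_goals exact Finset.mem_range.mp w.2

lemma chol_eq_of_lt {V : ℕ} (t : Fin V → Fin V → ℝ) (u : ℕ) (v : Fin V) (h : u < v.val) :
    chol t u v = t v ⟨u, h.trans v.isLt⟩ - ∑ w ∈ Finset.range u,
        chol t w v * chol t w ⟨u, h.trans v.isLt⟩ := by
  rw [chol.eq_def, dif_pos h, Finset.sum_attach (Finset.range u)
    (fun w => chol t w v * chol t w ⟨u, h.trans v.isLt⟩)]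

lemma chol_self {V : ℕ} (t : Fin V → Fin V → ℝ) (v : Fin V) : chol t v.val v = 1 := by
  rw [chol.eq_def, dif_neg (lt_irrefl _), if_pos rfl]

lemma chol_zero {V : ℕ} (t : Fin V → Fin V → ℝ) (u : ℕ) (v : Fin V) (h : v.val < u) :
    chol t u v = 0 := by
  rw [chol.eq_def, dif_neg (by omega), if_neg (by omega)]

lemma chol_gram {V R : ℕ} (hR : V ≤ R) (t : Fin V → Fin V → ℝ) (v u : Fin V) (h : u < v) :
    ∑ r : Fin R, chol t r.val v * chol t r.val u = t v u := by
  have hlt : (u : ℕ) < v := h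
  rw [Fin.sum_univ_eq_sum_range (fun n => chol t n v * chol t n u) R]
  rw [← Finset.sum_subset (Finset.range_subset_range.mpr (show u.val + 1 ≤ R by omega))
    (fun n hn hn' => by
      have : u.val < n := by simp [Finset.mem_range] at hn hn'; omega
      rw [chol_zero t n u this, mul_zero])]
  rw [Finset.sum_range_succ]
  have : chol t u.val u = 1 := chol_self t u
  rw [this, mul_one, chol_eq_of_lt t u.val v hlt]
  simp [Fin.eta]

lemma sigma_logit {p : ℝ} (h0 : 0 < p) (h1 : p < 1) :
    1 / (1 + Real.exp (-(Real.log (p / (1 - p))))) = p := by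
  have h1' : (0:ℝ) < 1 - p := by linarith
  rw [Real.exp_neg, Real.exp_log (div_pos h0 h1')]
  field_simp
  ring

lemma entry_eq {V R : ℕ} (X : Fin V → Fin R → ℝ) (lam : Fin R → ℝ) (i j : Fin V) :
    (Matrix.of X * Matrix.diagonal lam * (Matrix.of X)ᵀ) i j
      = ∑ r, X i r * lam r * X j r := by
  rw [Matrix.mul_apply]
  refine Finset.sum_congr rfl fun r _ => ?_
  simp [Matrix.mul_diagonal]

lemma sig_cont : Continuous (fun y : ℝ => 1 / (1 + Real.exp (-y))) := by
  apply continuous_const.div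
  · fun_prop
  · intro y; positivity


/-- **Lemma 3.2**: if `Π_Z`, `Π_X` and `Π_λ` have full `L1` support on `ℝ^N`, `ℝ^{V×R}` and
`ℝ_{≥0}^R` respectively, and `R ≥ V`, then the induced prior `Π_π` on the class-specific edge
probability vectors — the joint law of `(π^{(1)},…,π^{(H)})` with
`π^{(h)}_l = σ(Z_l + L(X^{(h)} Λ^{(h)} X^{(h)T})_l)`, where `Z ∼ Π_Z` and the pairs
`(X^{(h)}, λ^{(h)}) ∼ Π_X ⊗ Π_λ` are independent across `h` and of `Z` — assigns positive
mass to every `L1` neighborhood of any collection of vectors in `((0,1)^N)^H`. -/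
theorem induced_prior_full_support (V : ℕ) (hV : 2 ≤ V) (H R : ℕ) (hH : 1 ≤ H)
    (hR : V ≤ R)
    (PZ : Measure (EdgeIdx V → ℝ)) [IsProbabilityMeasure PZ]
    (PX : Measure (Fin V → Fin R → ℝ)) [IsProbabilityMeasure PX]
    (Plam : Measure (Fin R → ℝ)) [IsProbabilityMeasure Plam]
    -- `Π_λ` is a measure on the nonnegative orthant
    (hPlamsupp : Plam {lam | ∀ r, 0 ≤ lam r} = 1)
    -- full `L1` support of `Π_Z`
    (hZ : ∀ (Z0 : EdgeIdx V → ℝ) (ε : ℝ), 0 < ε →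
      0 < PZ {Z | ∑ l, |Z l - Z0 l| < ε})
    -- full `L1` support of `Π_X`
    (hX : ∀ (X0 : Fin V → Fin R → ℝ) (ε : ℝ), 0 < ε →
      0 < PX {X | ∑ v, ∑ r, |X v r - X0 v r| < ε})
    -- full `L1` support of `Π_λ` on the nonnegative orthant
    (hlam : ∀ (lam0 : Fin R → ℝ), (∀ r, 0 ≤ lam0 r) → ∀ ε : ℝ, 0 < ε →
      0 < Plam {lam | ∑ r, |lam r - lam0 r| < ε})
    -- the target collection of edge probability vectors
    (π0 : Fin H → EdgeIdx V → ℝ) (hπ0 : ∀ h l, π0 h l ∈ Set.Ioo (0 : ℝ) 1)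
    (επ : ℝ) (hεπ : 0 < επ) :
    0 < ((PZ.prod (Measure.pi (fun _ : Fin H => PX.prod Plam))).map
          (fun ZW : (EdgeIdx V → ℝ) × (Fin H → (Fin V → Fin R → ℝ) × (Fin R → ℝ)) =>
            fun (h : Fin H) (l : EdgeIdx V) =>
              1 / (1 + Real.exp (-(ZW.1 l +
                (Matrix.of (ZW.2 h).1 * Matrix.diagonal (ZW.2 h).2 *
                  (Matrix.of (ZW.2 h).1)ᵀ) l.1.1 l.1.2)))))
        {π : Fin H → EdgeIdx V → ℝ | ∑ h, ∑ l, |π h l - π0 h l| < επ} := by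
  classical
  set Ω := (EdgeIdx V → ℝ) × (Fin H → (Fin V → Fin R → ℝ) × (Fin R → ℝ)) with hΩ
  set F : Ω → (Fin H → EdgeIdx V → ℝ) :=
    fun ZW => fun (h : Fin H) (l : EdgeIdx V) =>
      1 / (1 + Real.exp (-(ZW.1 l +
        (Matrix.of (ZW.2 h).1 * Matrix.diagonal (ZW.2 h).2 *
          (Matrix.of (ZW.2 h).1)ᵀ) l.1.1 l.1.2))) with hFdef
  set T : Set (Fin H → EdgeIdx V → ℝ) :=
    {π | ∑ h, ∑ l, |π h l - π0 h l| < επ} with hTdef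
  -- targets
  set t : Fin H → Fin V → Fin V → ℝ := fun h v u =>
    if hvu : u < v then Real.log (π0 h ⟨(v,u), hvu⟩ / (1 - π0 h ⟨(v,u), hvu⟩)) else 0
    with htdef
  set X0 : Fin H → Fin V → Fin R → ℝ := fun h v r => chol (t h) r.val v with hX0def
  set lam0 : Fin R → ℝ := fun _ => 1 with hlam0def
  set Z0 : EdgeIdx V → ℝ := fun _ => 0 with hZ0def
  set p0 : Ω := (Z0, fun h => (X0 h, lam0)) with hp0def
  -- F p0 = π0
  have hFp0 : F p0 = π0 := by
    funext h l
    have hent : (Matrix.of (X0 h) * Matrix.diagonal lam0 * (Matrix.of (X0 h))ᵀ)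
        l.1.1 l.1.2 = t h l.1.1 l.1.2 := by
      rw [entry_eq]
      have : ∀ r : Fin R, X0 h l.1.1 r * lam0 r * X0 h l.1.2 r
          = chol (t h) r.val l.1.1 * chol (t h) r.val l.1.2 := by
        intro r; simp [hX0def, hlam0def]
      rw [Finset.sum_congr rfl fun r _ => this r]
      exact chol_gram hR (t h) l.1.1 l.1.2 l.2
    show 1 / (1 + Real.exp (-(Z0 l + _))) = π0 h l
    rw [hent]
    have hl : l.1.2 < l.1.1 := l.2
    have : t h l.1.1 l.1.2
        = Real.log (π0 h ⟨(l.1.1, l.1.2), hl⟩ / (1 - π0 h ⟨(l.1.1, l.1.2), hl⟩)) := by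
      simp [htdef, hl]
    rw [this]
    have hl' : (⟨(l.1.1, l.1.2), hl⟩ : EdgeIdx V) = l := by
      ext <;> rfl
    rw [hl']
    have h0 := (hπ0 h l).1
    have h1 := (hπ0 h l).2
    simp only [hZ0def, zero_add]
    exact sigma_logit h0 h1
  -- continuity of F
  have hFcont : Continuous F := by
    apply continuous_pi; intro h; apply continuous_pi; intro l
    have : (fun ZW : Ω => (Matrix.of (ZW.2 h).1 * Matrix.diagonal (ZW.2 h).2 *
        (Matrix.of (ZW.2 h).1)ᵀ) l.1.1 l.1.2)
        = fun ZW : Ω => ∑ r, (ZW.2 h).1 l.1.1 r * (ZW.2 h).2 r * (ZW.2 h).1 l.1.2 r := by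
      funext ZW; rw [entry_eq]
    show Continuous fun ZW : Ω => 1 / (1 + Real.exp (-(ZW.1 l + _)))
    have hg : Continuous fun ZW : Ω => ZW.1 l +
        (Matrix.of (ZW.2 h).1 * Matrix.diagonal (ZW.2 h).2 *
          (Matrix.of (ZW.2 h).1)ᵀ) l.1.1 l.1.2 := by
      apply Continuous.add
      · show Continuous fun ZW : (EdgeIdx V → ℝ) × (Fin H → (Fin V → Fin R → ℝ) × (Fin R → ℝ)) =>
          ZW.1 l
        fun_prop
      · rw [show (fun ZW : Ω => (Matrix.of (ZW.2 h).1 * Matrix.diagonal (ZW.2 h).2 *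
            (Matrix.of (ZW.2 h).1)ᵀ) l.1.1 l.1.2)
            = fun ZW : Ω => ∑ r, (ZW.2 h).1 l.1.1 r * (ZW.2 h).2 r * (ZW.2 h).1 l.1.2 r
          from funext fun ZW => entry_eq _ _ _ _]
        show Continuous fun ZW : (EdgeIdx V → ℝ) × (Fin H → (Fin V → Fin R → ℝ) × (Fin R → ℝ)) =>
          ∑ r, (ZW.2 h).1 l.1.1 r * (ZW.2 h).2 r * (ZW.2 h).1 l.1.2 r
        fun_prop
    exact sig_cont.comp hg
  -- T is open
  have hsum_cont : Continuous fun π : Fin H → EdgeIdx V → ℝ =>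
      ∑ h, ∑ l, |π h l - π0 h l| := by
    apply continuous_finset_sum; intro h _
    apply continuous_finset_sum; intro l _
    exact ((continuous_apply_apply h l).sub continuous_const).abs
  have hTopen : IsOpen T := isOpen_lt hsum_cont continuous_const
  -- preimage open, contains p0
  have hp0mem : p0 ∈ F ⁻¹' T := by
    simp only [Set.mem_preimage, hFp0, hTdef, Set.mem_setOf_eq]
    simpa using hεπ
  obtain ⟨δ, hδ, hball⟩ := Metric.isOpen_iff.mp (hTopen.preimage hFcont) p0 hp0mem
  -- the box
  set SZ : Set (EdgeIdx V → ℝ) := {Z | ∑ l, |Z l - Z0 l| < δ} with hSZdef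
  set SX : Fin H → Set (Fin V → Fin R → ℝ) :=
    fun h => {X | ∑ v, ∑ r, |X v r - X0 h v r| < δ} with hSXdef
  set SL : Set (Fin R → ℝ) := {lam | ∑ r, |lam r - lam0 r| < δ} with hSLdef
  have hbox : SZ ×ˢ Set.pi Set.univ (fun h => SX h ×ˢ SL) ⊆ Metric.ball p0 δ := by
    rintro ⟨Z, W⟩ ⟨hZm, hWm⟩
    rw [Metric.mem_ball, Prod.dist_eq]
    apply max_lt
    · rw [dist_pi_lt_iff hδ]
      intro l
      rw [Real.dist_eq]
      exact lt_of_le_of_lt (Finset.single_le_sum (f := fun l => |Z l - Z0 l|)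
        (fun i _ => abs_nonneg _) (Finset.mem_univ l)) hZm
    · rw [dist_pi_lt_iff hδ]
      intro h
      have hWh := hWm h (Set.mem_univ h)
      rw [Prod.dist_eq]
      apply max_lt
      · rw [dist_pi_lt_iff hδ]
        intro v
        rw [dist_pi_lt_iff hδ]
        intro r
        rw [Real.dist_eq]
        calc |(W h).1 v r - X0 h v r| ≤ ∑ r', |(W h).1 v r' - X0 h v r'| :=
              Finset.single_le_sum (f := fun r' => |(W h).1 v r' - X0 h v r'|)
                (fun i _ => abs_nonneg _) (Finset.mem_univ r)
          _ ≤ ∑ v', ∑ r', |(W h).1 v' r' - X0 h v' r'| :=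
              Finset.single_le_sum (f := fun v' => ∑ r', |(W h).1 v' r' - X0 h v' r'|)
                (fun i _ => Finset.sum_nonneg fun j _ => abs_nonneg _) (Finset.mem_univ v)
          _ < δ := hWh.1
      · rw [dist_pi_lt_iff hδ]
        intro r
        rw [Real.dist_eq]
        exact lt_of_le_of_lt (Finset.single_le_sum (f := fun r' => |(W h).2 r' - lam0 r'|)
          (fun i _ => abs_nonneg _) (Finset.mem_univ r)) hWh.2
  -- measurability of the box pieces
  have hSZopen : IsOpen SZ := isOpen_lt (by
    apply continuous_finset_sum; intro l _
    exact ((continuous_apply l).sub continuous_const).abs) continuous_const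
  have hSXopen : ∀ h, IsOpen (SX h) := fun h => isOpen_lt (by
    apply continuous_finset_sum; intro v _
    apply continuous_finset_sum; intro r _
    exact ((continuous_apply_apply v r).sub continuous_const).abs)
    continuous_const
  have hSLopen : IsOpen SL := isOpen_lt (by
    apply continuous_finset_sum; intro r _
    exact ((continuous_apply r).sub continuous_const).abs) continuous_const
  -- conclude
  rw [Measure.map_apply hFcont.measurable hTopen.measurableSet]
  refine lt_of_lt_of_le ?_ (measure_mono (hbox.trans hball))
  rw [Measure.prod_prod, Measure.pi_pi]
  have hprod : ∀ h : Fin H, (0:ENNReal) < (PX.prod Plam) (SX h ×ˢ SL) := by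
    intro h
    rw [Measure.prod_prod]
    exact ENNReal.mul_pos (hX (X0 h) δ hδ).ne' (hlam lam0 (fun _ => zero_le_one) δ hδ).ne'
  exact ENNReal.mul_pos (hZ Z0 δ hδ).ne'
    (CanonicallyOrderedAdd.prod_pos.mpr (fun h _ => hprod h)).ne'
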